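/- For any α in the symmetric inverse monoid IS_n, the number of idempotents of the semigroup (IS_n, *_α) equals 2^(rank α), where rank α is the cardinality of the image of α. -/

import Mathlib

/-- `PInj n` : the symmetric inverse semigroup `IS_n`, modeled as partial
injective maps `Fin n → Option (Fin n)`. -/
abbrev PInj (n : ℕ) : Type :=
  {f : Fin n → Option (Fin n) // ∀ x y z : Fin n, f x = some z → f y = some z → x = y}

/-- Composition, applying `f` first, then `g` (left-to-right, as in the paper). -/
def PInj.comp {n : ℕ} (f g : PInj n) : PInj n :=
  ⟨fun x => (f.1 x).bind g.1, by
    intro x y z hx hy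
    rcases Option.bind_eq_some_iff.mp hx with ⟨w, hfw, hgw⟩
    rcases Option.bind_eq_some_iff.mp hy with ⟨v, hfv, hgv⟩
    cases g.2 w v z hgw hgv
    exact f.2 x y w hfw hfv⟩

/-- The deformed multiplication `x *_α y = x · α · y` on `PInj n`. -/
def PInj.dmul {n : ℕ} (α x y : PInj n) : PInj n := (x.comp α).comp y

/-- The range (image) of a partial injection. -/
def PInj.ran {n : ℕ} (f : PInj n) : Set (Fin n) := {y | ∃ x, f.1 x = some y}

/-- The domain of a partial injection. -/
def PInj.dom {n : ℕ} (f : PInj n) : Set (Fin n) := {x | (f.1 x).isSome}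

/-- The rank of a partial injection: the cardinality of its range. -/
noncomputable def PInj.rank {n : ℕ} (f : PInj n) : ℕ := f.ran.ncard

/-- The permutation `σ ∈ S_n` viewed as an element of `IS_n`. -/
def PInj.ofPerm {n : ℕ} (σ : Equiv.Perm (Fin n)) : PInj n :=
  ⟨fun x => some (σ x), by
    intro x y z hx hy
    exact σ.injective ((Option.some.inj hx).trans (Option.some.inj hy).symm)⟩


/-- For any `α ∈ IS_n`, the number of idempotents of `(IS_n, *_α)`
equals `2 ^ rank α`. -/
lemma idem_iff {n : ℕ} (α ε : PInj n) :
    PInj.dmul α ε ε = ε ↔ ∀ x y, ε.1 x = some y → α.1 y = some x := by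
  constructor
  · intro h x y hxy
    have h1 : ((ε.1 x).bind α.1).bind ε.1 = ε.1 x := congrFun (congrArg Subtype.val h) x
    rw [hxy] at h1
    simp only [Option.bind_some] at h1
    rcases Option.bind_eq_some_iff.mp h1 with ⟨z, hz, hz2⟩
    cases ε.2 z x y hz2 hxy
    exact hz
  · intro h
    apply Subtype.ext; funext x
    show ((ε.1 x).bind α.1).bind ε.1 = ε.1 x
    cases hx : ε.1 x with
    | none => simp
    | some y => simp [h x y hx, hx]

open Classical in
noncomputable def restrInv {n : ℕ} (α : PInj n) (S : Set ↥α.ran) : PInj n :=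
  ⟨fun x => if h : ∃ hx : x ∈ α.ran, (⟨x, hx⟩ : ↥α.ran) ∈ S then some h.choose.choose
            else none, by
    intro x y z hx hy
    dsimp only at hx hy
    split at hx
    · rename_i h1
      split at hy
      · rename_i h2
        have s1 : α.1 h1.choose.choose = some x := h1.choose.choose_spec
        have s2 : α.1 h2.choose.choose = some y := h2.choose.choose_spec
        rw [Option.some.inj hx] at s1
        rw [Option.some.inj hy] at s2
        rw [s1] at s2
        exact Option.some.inj s2
      · cases hy
    · cases hx⟩

open Classical in
noncomputable def idemEquiv {n : ℕ} (α : PInj n) :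
    {ε : PInj n // PInj.dmul α ε ε = ε} ≃ Set ↥α.ran where
  toFun ε := {p | (ε.1.1 p.1).isSome}
  invFun S := ⟨restrInv α S, by
    rw [idem_iff]
    intro x y hxy
    unfold restrInv at hxy
    simp only at hxy
    split at hxy
    · rename_i h
      cases hxy
      exact h.choose.choose_spec
    · cases hxy⟩
  left_inv := by
    rintro ⟨ε, hε⟩
    rw [idem_iff] at hε
    apply Subtype.ext; apply Subtype.ext; funext x
    show (restrInv α _).1 x = ε.1 x
    unfold restrInv
    simp only
    split
    · rename_i h
      have hmem : (⟨x, h.choose⟩ : ↥α.ran) ∈ {p : ↥α.ran | (ε.1 p.1).isSome} := h.choose_spec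
      simp only [Set.mem_setOf_eq] at hmem
      rcases Option.isSome_iff_exists.mp hmem with ⟨y, hy⟩
      have hαy : α.1 y = some x := hε x y hy
      have hspec : α.1 ((h.choose : x ∈ α.ran).choose) = some x :=
        (h.choose : x ∈ α.ran).choose_spec
      rw [hy]
      congr 1
      exact α.2 _ _ x hspec hαy
    · rename_i h
      push_neg at h
      by_contra hne
      rcases Option.ne_none_iff_exists'.mp (Ne.symm hne) with ⟨y, hy⟩
      have hx : x ∈ α.ran := ⟨y, hε x y hy⟩
      have := h hx
      simp only [Set.mem_setOf_eq, hy] at this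
      exact this rfl
  right_inv := by
    intro S
    ext ⟨x, hx⟩
    simp only [Set.mem_setOf_eq]
    show ((restrInv α S).1 x).isSome ↔ _
    unfold restrInv
    simp only
    constructor
    · intro h
      split at h
      · rename_i h1
        exact h1.choose_spec
      · simp at h
    · intro hS
      rw [dif_pos ⟨hx, hS⟩]
      rfl


theorem card_idempotents_deformed (n : ℕ) (α : PInj n) :
    {ε : PInj n | PInj.dmul α ε ε = ε}.ncard = 2 ^ α.rank := by
  have h1 : {ε : PInj n | PInj.dmul α ε ε = ε}.ncard
      = Nat.card {ε : PInj n // PInj.dmul α ε ε = ε} :=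
    (Nat.card_coe_set_eq _).symm
  rw [h1, Nat.card_congr (idemEquiv α)]
  haveI : Fintype ↥α.ran := (Set.toFinite _).fintype
  classical
  rw [Nat.card_eq_fintype_card, Fintype.card_set, PInj.rank,
    Set.ncard_eq_toFinset_card', Set.toFinset_card]
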